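/- Let f = (f_{i₁…i_m}) ∈ 𝒮(ℝ²; S^mℝ²) be a rank m symmetric Schwartz tensor field on the plane with complex coordinates f̃_j defined via f = Σ_j f̃_j dz^{m−j} dz̄^j, and define the complex integral momenta μ̃_j^{αβ} = ∫_ℂ z^α z̄^β f̃_j(z) dσ(z). Then for all nonnegative integers r and 0 ≤ k ≤ m, the moment ∫_{−∞}^{∞} p^r (I^k f)(i p ζ, ζ) dp equals (i^r/2^{r+k}) Σ_{j=0}^{m} Σ_{α=0}^{r} Σ_{β=0}^{k} (−1)^α C(r,α) C(k,β) μ̃_j^{α+β, r+k−α−β} ζ^{m+r+k−j−α−β} ζ̄^{j+α+β} for every ζ ∈ ℂ with |ζ|=1; in particular it is the restriction to the unit circle of a homogeneous polynomial of degree r+k+m in (ζ,ζ̄). -/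

import Mathlib

open MeasureTheory Complex

/-- The `k`-th momentum ray transform on the plane, written in complex coordinates
(formula (3.4)): `(I^k f)(z,ζ) = ∫ t^k Σ_j f̃_j(z+tζ) ζ^{m−j} ζ̄^j dt`,
where `f̃_j` are the complex coordinates of a rank-`m` symmetric tensor field. -/
noncomputable def IkC (m k : ℕ) (ft : Fin (m + 1) → SchwartzMap ℂ ℂ) (z ζ : ℂ) : ℂ :=
  ∫ t : ℝ, (t : ℂ) ^ k *
    ∑ j : Fin (m + 1), ft j (z + t * ζ) * ζ ^ (m - (j : ℕ)) * (starRingEnd ℂ ζ) ^ (j : ℕ)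

/-- The complex integral momenta `μ̃_j^{αβ} = ∫_ℂ z^α z̄^β f̃_j(z) dσ(z)`. -/
noncomputable def muC (m : ℕ) (ft : Fin (m + 1) → SchwartzMap ℂ ℂ)
    (α β : ℕ) (j : Fin (m + 1)) : ℂ :=
  ∫ z : ℂ, z ^ α * (starRingEnd ℂ z) ^ β * ft j z

private lemma neg_one_pow_sub' {α r : ℕ} (hα : α ≤ r) :
    ((-1 : ℂ)) ^ (r - α) = (-1) ^ r * (-1) ^ α := by
  have h2 : ((-1 : ℂ)) ^ α * (-1) ^ α = 1 := by rw [← mul_pow]; norm_num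
  calc ((-1 : ℂ)) ^ (r - α) = (-1) ^ (r - α) * ((-1) ^ α * (-1) ^ α) := by rw [h2, mul_one]
    _ = ((-1) ^ (r - α) * (-1) ^ α) * (-1) ^ α := by ring
    _ = (-1) ^ r * (-1) ^ α := by rw [← pow_add, Nat.sub_add_cancel hα]

private lemma term_pt (m k r α β jn : ℕ) (hα : α ≤ r) (hβ : β ≤ k) (hj : jn ≤ m)
    (z ζ fz : ℂ) :
    (z * starRingEnd ℂ ζ) ^ α * (-(starRingEnd ℂ (z * starRingEnd ℂ ζ))) ^ (r - α) *
        ((r.choose α : ℕ) : ℂ) *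
      ((z * starRingEnd ℂ ζ) ^ β * (starRingEnd ℂ (z * starRingEnd ℂ ζ)) ^ (k - β) *
        ((k.choose β : ℕ) : ℂ)) *
      (fz * ζ ^ (m - jn) * (starRingEnd ℂ ζ) ^ jn)
    = (-1 : ℂ) ^ r *
        ((-1 : ℂ) ^ α * (r.choose α : ℂ) * (k.choose β : ℂ) *
          (z ^ (α + β) * (starRingEnd ℂ z) ^ (r + k - α - β) * fz) *
          ζ ^ (m + r + k - jn - α - β) * (starRingEnd ℂ ζ) ^ (jn + α + β)) := by
  have e1 : r + k - α - β = (r - α) + (k - β) := by omega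
  have e2 : m + r + k - jn - α - β = (m - jn) + ((r - α) + (k - β)) := by omega
  have e3 : jn + α + β = jn + (α + β) := by omega
  have hc : starRingEnd ℂ (z * starRingEnd ℂ ζ) = starRingEnd ℂ z * ζ := by
    rw [map_mul, Complex.conj_conj]
  have hneg : (-(starRingEnd ℂ z * ζ)) ^ (r - α)
      = ((-1 : ℂ) ^ r * (-1) ^ α) * (starRingEnd ℂ z * ζ) ^ (r - α) := by
    rw [neg_pow, neg_one_pow_sub' hα]
  rw [hc, hneg, e1, e2, e3]
  ring

private lemma key_pt (m k r jn : ℕ) (hj : jn ≤ m) (z ζ fz : ℂ) :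
    (((z * starRingEnd ℂ ζ).im : ℂ)) ^ r * (((z * starRingEnd ℂ ζ).re : ℂ)) ^ k *
      (fz * ζ ^ (m - jn) * (starRingEnd ℂ ζ) ^ jn)
    = ∑ α ∈ Finset.range (r + 1), ∑ β ∈ Finset.range (k + 1),
        Complex.I ^ r / 2 ^ (r + k) *
          ((-1 : ℂ) ^ α * (r.choose α : ℂ) * (k.choose β : ℂ) *
            (z ^ (α + β) * (starRingEnd ℂ z) ^ (r + k - α - β) * fz) *
            ζ ^ (m + r + k - jn - α - β) * (starRingEnd ℂ ζ) ^ (jn + α + β)) := by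
  have hne : ((2 : ℂ)) ^ (r + k) * Complex.I ^ r ≠ 0 :=
    mul_ne_zero (pow_ne_zero _ two_ne_zero) (pow_ne_zero _ Complex.I_ne_zero)
  apply mul_right_cancel₀ hne
  have hIm : (((z * starRingEnd ℂ ζ).im : ℂ)) * (2 * Complex.I)
      = z * starRingEnd ℂ ζ - starRingEnd ℂ (z * starRingEnd ℂ ζ) := by
    rw [Complex.sub_conj]; push_cast; ring
  have hRe : (((z * starRingEnd ℂ ζ).re : ℂ)) * 2
      = z * starRingEnd ℂ ζ + starRingEnd ℂ (z * starRingEnd ℂ ζ) := by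
    rw [Complex.add_conj]; push_cast; ring
  have lhs_eq : (((z * starRingEnd ℂ ζ).im : ℂ)) ^ r * (((z * starRingEnd ℂ ζ).re : ℂ)) ^ k *
      (fz * ζ ^ (m - jn) * (starRingEnd ℂ ζ) ^ jn) * (((2 : ℂ)) ^ (r + k) * Complex.I ^ r)
      = (z * starRingEnd ℂ ζ + -(starRingEnd ℂ (z * starRingEnd ℂ ζ))) ^ r *
        (z * starRingEnd ℂ ζ + starRingEnd ℂ (z * starRingEnd ℂ ζ)) ^ k *
        (fz * ζ ^ (m - jn) * (starRingEnd ℂ ζ) ^ jn) := by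
    rw [← sub_eq_add_neg, ← hIm, ← hRe]; ring
  have hII : Complex.I ^ r * Complex.I ^ r = (-1 : ℂ) ^ r := by
    rw [← pow_add, show r + r = 2 * r by ring, pow_mul, Complex.I_sq]
  have h2 : ((2 : ℂ)) ^ (r + k) ≠ 0 := pow_ne_zero _ two_ne_zero
  have hcancel : ∀ T : ℂ, (Complex.I ^ r / 2 ^ (r + k) * T) * (((2 : ℂ)) ^ (r + k) * Complex.I ^ r)
      = (-1 : ℂ) ^ r * T := by
    intro T
    calc (Complex.I ^ r / 2 ^ (r + k) * T) * (((2 : ℂ)) ^ (r + k) * Complex.I ^ r)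
        = (Complex.I ^ r * Complex.I ^ r) * T * (((2 : ℂ)) ^ (r + k) / 2 ^ (r + k)) := by ring
      _ = (-1 : ℂ) ^ r * T := by rw [div_self h2, hII, mul_one]
  rw [lhs_eq, add_pow, add_pow, Finset.sum_mul_sum, Finset.sum_mul, Finset.sum_mul]
  refine Finset.sum_congr rfl fun α hα => ?_
  rw [Finset.sum_mul, Finset.sum_mul]
  refine Finset.sum_congr rfl fun β hβ => ?_
  rw [hcancel]
  exact term_pt m k r α β jn (Nat.lt_succ_iff.mp (Finset.mem_range.mp hα))
    (Nat.lt_succ_iff.mp (Finset.mem_range.mp hβ)) hj z ζ fz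

private lemma zab_integrable (f : SchwartzMap ℂ ℂ) (a b : ℕ) :
    Integrable (fun z : ℂ => z ^ a * (starRingEnd ℂ z) ^ b * f z) := by
  refine (f.integrable_pow_mul volume (a + b)).mono ?_
    (Filter.Eventually.of_forall fun z => ?_)
  · exact (((continuous_pow a).mul ((Complex.continuous_conj).pow b)).mul
      f.continuous).aestronglyMeasurable
  · calc ‖z ^ a * (starRingEnd ℂ z) ^ b * f z‖ = ‖z‖ ^ (a + b) * ‖f z‖ := by
          rw [norm_mul, norm_mul, norm_pow, norm_pow, RCLike.norm_conj, pow_add]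
      _ ≤ ‖‖z‖ ^ (a + b) * ‖f z‖‖ := Real.le_norm_self _

private lemma G_integrable (m k r : ℕ) (ft : Fin (m + 1) → SchwartzMap ℂ ℂ) (ζ : ℂ)
    (hζ : ‖ζ‖ = 1) :
    Integrable (fun z : ℂ => (((z * starRingEnd ℂ ζ).im : ℂ)) ^ r *
      (((z * starRingEnd ℂ ζ).re : ℂ)) ^ k *
      ∑ j : Fin (m + 1), ft j z * ζ ^ (m - (j : ℕ)) * (starRingEnd ℂ ζ) ^ (j : ℕ)) := by
  have hint : Integrable (fun z : ℂ => ∑ j : Fin (m + 1), ‖z‖ ^ (r + k) * ‖ft j z‖) :=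
    integrable_finset_sum _ (fun j _ => (ft j).integrable_pow_mul volume (r + k))
  refine hint.mono ?_ (Filter.Eventually.of_forall fun z => ?_)
  · apply Continuous.aestronglyMeasurable
    refine Continuous.mul (Continuous.mul ?_ ?_) (continuous_finset_sum _ fun j _ => ?_)
    · exact (Complex.continuous_ofReal.comp
        (Complex.continuous_im.comp (continuous_id.mul continuous_const))).pow r
    · exact (Complex.continuous_ofReal.comp
        (Complex.continuous_re.comp (continuous_id.mul continuous_const))).pow k
    · exact ((ft j).continuous.mul continuous_const).mul continuous_const
  · have habs : ‖z * starRingEnd ℂ ζ‖ = ‖z‖ := by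
      rw [norm_mul, Complex.norm_conj, hζ, mul_one]
    have h1 : ‖(((z * starRingEnd ℂ ζ).im : ℝ) : ℂ)‖ ≤ ‖z‖ := by
      rw [Complex.norm_real, Real.norm_eq_abs, ← habs]
      exact Complex.abs_im_le_norm _
    have h2 : ‖(((z * starRingEnd ℂ ζ).re : ℝ) : ℂ)‖ ≤ ‖z‖ := by
      rw [Complex.norm_real, Real.norm_eq_abs, ← habs]
      exact Complex.abs_re_le_norm _
    have h3 : ‖∑ j : Fin (m + 1), ft j z * ζ ^ (m - (j : ℕ)) * (starRingEnd ℂ ζ) ^ (j : ℕ)‖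
        ≤ ∑ j : Fin (m + 1), ‖ft j z‖ := by
      refine (norm_sum_le _ _).trans (Finset.sum_le_sum fun j _ => ?_)
      rw [norm_mul, norm_mul, norm_pow, norm_pow, Complex.norm_conj, hζ]
      simp
    calc ‖(((z * starRingEnd ℂ ζ).im : ℂ)) ^ r * (((z * starRingEnd ℂ ζ).re : ℂ)) ^ k *
          ∑ j : Fin (m + 1), ft j z * ζ ^ (m - (j : ℕ)) * (starRingEnd ℂ ζ) ^ (j : ℕ)‖
        = ‖(((z * starRingEnd ℂ ζ).im : ℂ))‖ ^ r * ‖(((z * starRingEnd ℂ ζ).re : ℂ))‖ ^ k *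
          ‖∑ j : Fin (m + 1), ft j z * ζ ^ (m - (j : ℕ)) * (starRingEnd ℂ ζ) ^ (j : ℕ)‖ := by
          rw [norm_mul, norm_mul, norm_pow, norm_pow]
      _ ≤ ‖z‖ ^ r * ‖z‖ ^ k * ∑ j : Fin (m + 1), ‖ft j z‖ := by
          have hn : (0:ℝ) ≤ ‖z‖ := norm_nonneg _
          gcongr
      _ = ∑ j : Fin (m + 1), ‖z‖ ^ (r + k) * ‖ft j z‖ := by
          rw [← pow_add, Finset.mul_sum]
      _ ≤ ‖∑ j : Fin (m + 1), ‖z‖ ^ (r + k) * ‖ft j z‖‖ := Real.le_norm_self _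

/-- Necessity part of Theorem 4.1: the `r`-th moment of `(I^k f)(ipζ,ζ)` in `p` is the
restriction to the unit circle of an explicit homogeneous polynomial of degree
`r+k+m` in `(ζ,ζ̄)` whose coefficients are the complex integral momenta. -/
theorem stmt18 (m k r : ℕ) (hk : k ≤ m) (ft : Fin (m + 1) → SchwartzMap ℂ ℂ)
    (ζ : ℂ) (hζ : ‖ζ‖ = 1) :
    (∫ p : ℝ, (p : ℂ) ^ r * IkC m k ft (Complex.I * p * ζ) ζ)
      = (Complex.I ^ r / 2 ^ (r + k)) *
          ∑ j : Fin (m + 1), ∑ α ∈ Finset.range (r + 1), ∑ β ∈ Finset.range (k + 1),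
            (-1 : ℂ) ^ α * (r.choose α : ℂ) * (k.choose β : ℂ) *
              muC m ft (α + β) (r + k - α - β) j *
              ζ ^ (m + r + k - (j : ℕ) - α - β) *
              (starRingEnd ℂ ζ) ^ ((j : ℕ) + α + β) := by
  classical
  have hζζ : ζ * starRingEnd ℂ ζ = 1 := by
    rw [Complex.mul_conj, Complex.normSq_eq_norm_sq, hζ]; norm_num
  set c : Circle := ⟨ζ, mem_sphere_zero_iff_norm.2 (by rw [hζ])⟩ with hc
  set e := rotation c with he
  set Φ : ℝ × ℝ → ℂ := fun q => ζ * ((q.2 : ℂ) + (q.1 : ℂ) * Complex.I) with hΦdef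
  have hΦeq : Φ = ⇑e ∘ (⇑Complex.measurableEquivRealProd.symm ∘
      ⇑(MeasurableEquiv.prodComm (α := ℝ) (β := ℝ))) := by
    funext q
    simp [hΦdef, he, Complex.measurableEquivRealProd_symm_apply, hc]
    show ζ * _ = ζ * _
    congr 1
    apply Complex.ext <;> simp [MeasurableEquiv.prodComm]
  have hswap : MeasurePreserving (⇑(MeasurableEquiv.prodComm (α := ℝ) (β := ℝ)))
      (volume : Measure (ℝ × ℝ)) volume := by
    have := Measure.measurePreserving_swap (μ := (volume : Measure ℝ)) (ν := (volume : Measure ℝ))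
    rw [Measure.volume_eq_prod]
    exact this
  have hΦmp : MeasurePreserving Φ volume volume := by
    rw [hΦeq]
    exact (e.measurePreserving).comp
      ((Complex.volume_preserving_equiv_real_prod.symm).comp hswap)
  have hΦemb : MeasurableEmbedding Φ := by
    rw [hΦeq]
    exact (e.toHomeomorph.measurableEmbedding).comp
      ((Complex.measurableEquivRealProd.symm.measurableEmbedding).comp
        (MeasurableEquiv.prodComm (α := ℝ) (β := ℝ)).measurableEmbedding)
  set G : ℂ → ℂ := fun z => (((z * starRingEnd ℂ ζ).im : ℂ)) ^ r *
      (((z * starRingEnd ℂ ζ).re : ℂ)) ^ k *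
      ∑ j : Fin (m + 1), ft j z * ζ ^ (m - (j : ℕ)) * (starRingEnd ℂ ζ) ^ (j : ℕ) with hGdef
  have hGint : Integrable G := G_integrable m k r ft ζ hζ
  have hpt : ∀ p : ℝ, (p : ℂ) ^ r * IkC m k ft (Complex.I * p * ζ) ζ
      = ∫ t : ℝ, G (Φ (p, t)) := by
    intro p
    rw [IkC, ← integral_const_mul]
    congr 1
    funext t
    have h5 : Φ (p, t) * starRingEnd ℂ ζ = (t : ℂ) + (p : ℂ) * Complex.I := by
      calc Φ (p, t) * starRingEnd ℂ ζ
          = ((t : ℂ) + (p : ℂ) * Complex.I) * (ζ * starRingEnd ℂ ζ) := by rw [hΦdef]; ring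
        _ = (t : ℂ) + (p : ℂ) * Complex.I := by rw [hζζ, mul_one]
    have harg : Complex.I * (p : ℂ) * ζ + (t : ℂ) * ζ = Φ (p, t) := by
      rw [hΦdef]; ring
    rw [hGdef]
    simp only
    rw [harg, h5]
    have him : ((t : ℂ) + (p : ℂ) * Complex.I).im = p := by simp
    have hre : ((t : ℂ) + (p : ℂ) * Complex.I).re = t := by simp
    rw [him, hre]
    ring
  have hcomp : Integrable (fun q : ℝ × ℝ => G (Φ q)) volume :=
    (hΦmp.integrable_comp_emb hΦemb).mpr hGint
  have step1 : (∫ p : ℝ, (p : ℂ) ^ r * IkC m k ft (Complex.I * p * ζ) ζ) = ∫ z : ℂ, G z := by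
    calc (∫ p : ℝ, (p : ℂ) ^ r * IkC m k ft (Complex.I * p * ζ) ζ)
        = ∫ p : ℝ, ∫ t : ℝ, G (Φ (p, t)) := by
          exact integral_congr_ae (Filter.Eventually.of_forall hpt)
      _ = ∫ q : ℝ × ℝ, G (Φ q) := by
          rw [Measure.volume_eq_prod] at hcomp
          rw [MeasureTheory.integral_integral hcomp, ← Measure.volume_eq_prod]
      _ = ∫ z : ℂ, G z := hΦmp.integral_comp hΦemb G
  have hGexp : ∀ z : ℂ, G z = ∑ j : Fin (m + 1), ∑ α ∈ Finset.range (r + 1),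
      ∑ β ∈ Finset.range (k + 1),
        Complex.I ^ r / 2 ^ (r + k) *
          ((-1 : ℂ) ^ α * (r.choose α : ℂ) * (k.choose β : ℂ) *
            (z ^ (α + β) * (starRingEnd ℂ z) ^ (r + k - α - β) * ft j z) *
            ζ ^ (m + r + k - (j : ℕ) - α - β) * (starRingEnd ℂ ζ) ^ ((j : ℕ) + α + β)) := by
    intro z
    rw [hGdef]
    simp only
    rw [Finset.mul_sum]
    exact Finset.sum_congr rfl fun j _ =>
      key_pt m k r (j : ℕ) (Nat.lt_succ_iff.mp j.isLt) z ζ (ft j z)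
  have hTint : ∀ (j : Fin (m + 1)) (α β : ℕ),
      Integrable (fun z : ℂ => Complex.I ^ r / 2 ^ (r + k) *
        ((-1 : ℂ) ^ α * (r.choose α : ℂ) * (k.choose β : ℂ) *
          (z ^ (α + β) * (starRingEnd ℂ z) ^ (r + k - α - β) * ft j z) *
          ζ ^ (m + r + k - (j : ℕ) - α - β) * (starRingEnd ℂ ζ) ^ ((j : ℕ) + α + β))) := by
    intro j α β
    have h := (zab_integrable (ft j) (α + β) (r + k - α - β)).const_mul
      (Complex.I ^ r / 2 ^ (r + k) * ((-1 : ℂ) ^ α * (r.choose α : ℂ) * (k.choose β : ℂ)) *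
        ζ ^ (m + r + k - (j : ℕ) - α - β) * (starRingEnd ℂ ζ) ^ ((j : ℕ) + α + β))
    refine h.congr (Filter.Eventually.of_forall fun z => ?_)
    ring
  have step2 : (∫ z : ℂ, G z)
      = (Complex.I ^ r / 2 ^ (r + k)) *
          ∑ j : Fin (m + 1), ∑ α ∈ Finset.range (r + 1), ∑ β ∈ Finset.range (k + 1),
            (-1 : ℂ) ^ α * (r.choose α : ℂ) * (k.choose β : ℂ) *
              muC m ft (α + β) (r + k - α - β) j *
              ζ ^ (m + r + k - (j : ℕ) - α - β) *
              (starRingEnd ℂ ζ) ^ ((j : ℕ) + α + β) := by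
    rw [integral_congr_ae (Filter.Eventually.of_forall hGexp)]
    rw [integral_finset_sum _ (fun j _ => integrable_finset_sum _ (fun α _ =>
      integrable_finset_sum _ (fun β _ => hTint j α β)))]
    rw [Finset.mul_sum]
    refine Finset.sum_congr rfl fun j _ => ?_
    rw [integral_finset_sum _ (fun α _ => integrable_finset_sum _ (fun β _ => hTint j α β))]
    rw [Finset.mul_sum]
    refine Finset.sum_congr rfl fun α _ => ?_
    rw [integral_finset_sum _ (fun β _ => hTint j α β)]
    rw [Finset.mul_sum]
    refine Finset.sum_congr rfl fun β _ => ?_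
    have heq : (fun z : ℂ => Complex.I ^ r / 2 ^ (r + k) *
        ((-1 : ℂ) ^ α * (r.choose α : ℂ) * (k.choose β : ℂ) *
          (z ^ (α + β) * (starRingEnd ℂ z) ^ (r + k - α - β) * ft j z) *
          ζ ^ (m + r + k - (j : ℕ) - α - β) * (starRingEnd ℂ ζ) ^ ((j : ℕ) + α + β)))
        = fun z : ℂ => (Complex.I ^ r / 2 ^ (r + k) *
          ((-1 : ℂ) ^ α * (r.choose α : ℂ) * (k.choose β : ℂ)) *
          ζ ^ (m + r + k - (j : ℕ) - α - β) * (starRingEnd ℂ ζ) ^ ((j : ℕ) + α + β)) *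
          (z ^ (α + β) * (starRingEnd ℂ z) ^ (r + k - α - β) * ft j z) := by
      funext z; ring
    rw [heq, integral_const_mul, muC]
    ring
  rw [step1, step2]
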